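/- arXiv:0812.4819 — 2 statements merged into one kernel-verified Lean document; each statement's English description precedes it below -/
import Mathlib

section
/- With D_+² = −Δ − 4|x|² + 4𝔼 + 2m acting on polynomials in m variables and H_k a harmonic homogeneous polynomial of degree k, the Clifford–Hermite polynomial CH_{2t}(H_k) := (D_+²)^t H_k satisfies the differential equation (Δ − 2𝔼) CH_{2t}(H_k) = −2(2t + k) CH_{2t}(H_k). -/
open MvPolynomial

/-- The Laplacian `Δ = ∑ ∂_{x_i}²` on polynomials in `m` variables. -/
noncomputable def lap (m : ℕ) : Module.End ℝ (MvPolynomial (Fin m) ℝ) :=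
  ∑ i : Fin m, ((pderiv i).toLinearMap * (pderiv i).toLinearMap)

/-- The Euler operator `𝔼 = ∑ x_i ∂_{x_i}`. -/
noncomputable def euler (m : ℕ) : Module.End ℝ (MvPolynomial (Fin m) ℝ) :=
  ∑ i : Fin m, (LinearMap.mulLeft ℝ (X i) * (pderiv i).toLinearMap)

/-- Multiplication by `|x|² = ∑ x_i²`. -/
noncomputable def nsqOp (m : ℕ) : Module.End ℝ (MvPolynomial (Fin m) ℝ) :=
  LinearMap.mulLeft ℝ (∑ i : Fin m, X i ^ 2)


/-- The scalar operator `D_+² = −Δ − 4|x|² + 4𝔼 + 2m`. -/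
noncomputable def Dplus2 (m : ℕ) : Module.End ℝ (MvPolynomial (Fin m) ℝ) :=
  -lap m - (4 : ℝ) • nsqOp m + (4 : ℝ) • euler m + ((2 * m : ℕ) : ℝ) • 1

section Aux

variable {m : ℕ}

lemma lap_apply (p : MvPolynomial (Fin m) ℝ) :
    lap m p = ∑ i, pderiv i (pderiv i p) := by
  simp [lap, Module.End.mul_apply, LinearMap.sum_apply]

lemma euler_apply (p : MvPolynomial (Fin m) ℝ) :
    euler m p = ∑ i, X i * pderiv i p := by
  simp [euler, Module.End.mul_apply, LinearMap.sum_apply]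

lemma nsq_apply (p : MvPolynomial (Fin m) ℝ) :
    nsqOp m p = (∑ i : Fin m, X i ^ 2) * p := rfl

lemma pderiv_two (i : Fin m) : pderiv i (2 : MvPolynomial (Fin m) ℝ) = 0 := by
  have : (2 : MvPolynomial (Fin m) ℝ) = C 2 := (map_ofNat C 2).symm
  rw [this, pderiv_C]

lemma pderiv_sumsq (i : Fin m) :
    pderiv i (∑ j : Fin m, X j ^ 2 : MvPolynomial (Fin m) ℝ) = 2 * X i := by
  rw [map_sum, Finset.sum_eq_single i]
  · simp [pderiv_pow]
  · intro j _ hj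
    simp [pderiv_pow, pderiv_X_of_ne hj]
  · simp

lemma pderiv_pderiv (i j : Fin m) (p : MvPolynomial (Fin m) ℝ) :
    pderiv i (pderiv j p) = pderiv j (pderiv i p) := by
  induction p using MvPolynomial.induction_on' with
  | add p q hp hq => simp [hp, hq]
  | monomial s a =>
    classical
    rcases eq_or_ne i j with rfl | hij
    · rfl
    · simp only [pderiv_monomial]
      rw [tsub_right_comm]
      congr 1
      simp [Finsupp.single_apply, hij, Ne.symm hij]
      ring

lemma real_smul (r : ℝ) (p : MvPolynomial (Fin m) ℝ) : r • p = C r * p :=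
  (MvPolynomial.smul_eq_C_mul p r)

lemma two_smul'' (p : MvPolynomial (Fin m) ℝ) : (2 : ℝ) • p = 2 * p := by
  rw [real_smul, map_ofNat]

lemma four_smul'' (p : MvPolynomial (Fin m) ℝ) : (4 : ℝ) • p = 4 * p := by
  rw [real_smul, map_ofNat]

lemma lap_nsq (p : MvPolynomial (Fin m) ℝ) :
    lap m (nsqOp m p) =
      nsqOp m (lap m p) + (4 : ℝ) • euler m p + ((2 * m : ℕ) : ℝ) • p := by
  rw [nsq_apply, nsq_apply, lap_apply, lap_apply, euler_apply]
  have h : ∀ i : Fin m, pderiv i (pderiv i ((∑ j : Fin m, X j ^ 2) * p)) =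
      (∑ j : Fin m, X j ^ 2) * pderiv i (pderiv i p) + (X i * pderiv i p) * 4 + 2 * p := by
    intro i
    simp only [pderiv_mul, pderiv_sumsq, map_add, pderiv_two, pderiv_X_self]
    ring
  rw [Finset.sum_congr rfl fun i _ => h i, Finset.sum_add_distrib, Finset.sum_add_distrib,
    ← Finset.mul_sum, ← Finset.sum_mul, Finset.sum_const, Finset.card_univ, Fintype.card_fin,
    four_smul'', Nat.cast_smul_eq_nsmul ℝ, nsmul_eq_mul, nsmul_eq_mul]
  push_cast
  ring

lemma euler_nsq (p : MvPolynomial (Fin m) ℝ) :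
    euler m (nsqOp m p) = nsqOp m (euler m p) + (2 : ℝ) • nsqOp m p := by
  simp only [nsq_apply, euler_apply, two_smul'']
  have h : ∀ i : Fin m, X i * pderiv i ((∑ j : Fin m, X j ^ 2) * p) =
      (∑ j : Fin m, X j ^ 2) * (X i * pderiv i p) + X i ^ 2 * (2 * p) := by
    intro i
    rw [pderiv_mul, pderiv_sumsq]
    ring
  rw [Finset.sum_congr rfl fun i _ => h i, Finset.sum_add_distrib, ← Finset.mul_sum,
    ← Finset.sum_mul]
  ring

lemma lap_euler (p : MvPolynomial (Fin m) ℝ) :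
    lap m (euler m p) = euler m (lap m p) + (2 : ℝ) • lap m p := by
  rw [lap_apply p, euler_apply, lap_apply, euler_apply, two_smul'']
  have h : ∀ i j : Fin m, pderiv i (pderiv i (X j * pderiv j p)) =
      X j * pderiv j (pderiv i (pderiv i p)) +
        (if j = i then 2 * pderiv i (pderiv i p) else 0) := by
    intro i j
    rcases eq_or_ne j i with rfl | hij
    · simp only [if_true, eq_self_iff_true, pderiv_mul, pderiv_X_self, map_add, pderiv_one, map_zero]
      ring
    · simp only [if_neg hij, pderiv_mul, pderiv_X_of_ne hij, map_add, pderiv_one, map_zero]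
      rw [pderiv_pderiv j i (pderiv i p), pderiv_pderiv j i p]
      ring
  calc ∑ i, pderiv i (pderiv i (∑ j, X j * pderiv j p))
      = ∑ i, ∑ j, pderiv i (pderiv i (X j * pderiv j p)) := by
        simp [map_sum]
    _ = ∑ i, ∑ j, (X j * pderiv j (pderiv i (pderiv i p)) +
          (if j = i then 2 * pderiv i (pderiv i p) else 0)) := by
        exact Finset.sum_congr rfl fun i _ => Finset.sum_congr rfl fun j _ => h i j
    _ = ∑ i, (∑ j, X j * pderiv j (pderiv i (pderiv i p)) + 2 * pderiv i (pderiv i p)) := by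
        refine Finset.sum_congr rfl fun i _ => ?_
        rw [Finset.sum_add_distrib, Finset.sum_ite_eq' Finset.univ i
          (fun _ => 2 * pderiv i (pderiv i p))]
        simp
    _ = ∑ j, X j * pderiv j (∑ i, pderiv i (pderiv i p)) + 2 * ∑ i, pderiv i (pderiv i p) := by
        rw [Finset.sum_add_distrib, Finset.sum_comm, Finset.mul_sum]
        simp [map_sum, Finset.mul_sum]

lemma euler_homog {k : ℕ} {p : MvPolynomial (Fin m) ℝ} (hp : p.IsHomogeneous k) :
    euler m p = (k : ℝ) • p := by
  have hmono : ∀ s : Fin m →₀ ℕ, ∀ c : ℝ,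
      euler m (monomial s c) = ((∑ i, s i : ℕ) : ℝ) • monomial s c := by
    intro s c
    rw [euler_apply]
    rw [Nat.cast_sum, Finset.sum_smul]
    refine Finset.sum_congr rfl fun i _ => ?_
    rw [pderiv_monomial]
    rcases Nat.eq_zero_or_pos (s i) with h0 | hpos
    · simp [h0]
    · have hle : Finsupp.single i 1 ≤ s := by
        rw [Finsupp.single_le_iff]; exact hpos
      have : X i * monomial (s - Finsupp.single i 1) (c * (s i : ℝ)) =
          monomial s (c * (s i : ℝ)) := by
        rw [← pow_one (X i : MvPolynomial (Fin m) ℝ), ← monomial_single_add,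
          add_tsub_cancel_of_le hle]
      rw [this, smul_monomial, smul_eq_mul, mul_comm]
  conv_lhs => rw [p.as_sum, map_sum]
  conv_rhs => rw [p.as_sum, Finset.smul_sum]
  refine Finset.sum_congr rfl fun s hs => ?_
  rw [hmono]
  congr 2
  have hdeg : s.degree = k := by
    have := hp (MvPolynomial.mem_support_iff.mp hs)
    rw [Finsupp.degree_eq_weight_one]; exact this
  rw [← hdeg, Finsupp.degree]
  exact (Finset.sum_subset (Finset.subset_univ _)
    (fun x _ hx => Finsupp.notMem_support_iff.mp hx)).symm

lemma Dplus2_apply (p : MvPolynomial (Fin m) ℝ) :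
    Dplus2 m p = -(lap m p) - (4 : ℝ) • nsqOp m p + (4 : ℝ) • euler m p
      + ((2 * m : ℕ) : ℝ) • p := by
  simp [Dplus2, LinearMap.add_apply, LinearMap.sub_apply, LinearMap.smul_apply,
    LinearMap.neg_apply]

lemma key_comm (p : MvPolynomial (Fin m) ℝ) :
    (lap m - (2 : ℝ) • euler m) (Dplus2 m p) =
      Dplus2 m ((lap m - (2 : ℝ) • euler m) p) - (4 : ℝ) • Dplus2 m p := by
  simp only [LinearMap.sub_apply, LinearMap.smul_apply, Dplus2_apply,
    map_add, map_sub, map_neg, map_smul, lap_nsq, euler_nsq, lap_euler]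
  module

end Aux

theorem cliffordHermite_diff_eq (m k t : ℕ) (H : MvPolynomial (Fin m) ℝ)
    (hH : H.IsHomogeneous k) (hharm : lap m H = 0) :
    (lap m - (2 : ℝ) • euler m) ((Dplus2 m ^ t) H) =
      (-(2 * (2 * t + k) : ℝ)) • (Dplus2 m ^ t) H := by
  induction t with
  | zero =>
    simp only [pow_zero, Module.End.one_apply, LinearMap.sub_apply, LinearMap.smul_apply,
      hharm, euler_homog hH, zero_sub, smul_smul, ← neg_smul]
    congr 1
    push_cast
    ring
  | succ t ih =>
    have hpow : (Dplus2 m ^ (t + 1)) H = Dplus2 m ((Dplus2 m ^ t) H) := by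
      rw [pow_succ' (Dplus2 m) t, Module.End.mul_apply]
    rw [hpow, key_comm, ih, map_smul, ← hpow, ← sub_smul]
    congr 1
    push_cast
    ring
end

section
/- Rodrigues formula: for H_k a harmonic homogeneous polynomial of degree k in m variables, CH_{2t}(H_k) = e^{|x|²} (−Δ)^t (e^{−|x|²} H_k), where CH_{2t}(H_k) = (−Δ − 4|x|² + 4𝔼 + 2m)^t H_k. -/
/-- The Laplacian `Δf = ∑ ∂²f/∂x_i²` on functions `ℝ^m → ℝ`. -/
noncomputable def lapF (m : ℕ) (f : (Fin m → ℝ) → ℝ) (x : Fin m → ℝ) : ℝ :=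
  ∑ i : Fin m, fderiv ℝ (fun y => fderiv ℝ f y (Pi.single i 1)) x (Pi.single i 1)

/-- The Euler operator `𝔼f = ∑ x_i ∂f/∂x_i`. -/
noncomputable def eulerF (m : ℕ) (f : (Fin m → ℝ) → ℝ) (x : Fin m → ℝ) : ℝ :=
  ∑ i : Fin m, x i * fderiv ℝ f x (Pi.single i 1)

/-- The squared norm `|x|² = ∑ x_i²`. -/
def nsqF (m : ℕ) (x : Fin m → ℝ) : ℝ := ∑ i : Fin m, x i ^ 2

open MvPolynomial

noncomputable def Dpoly (m : ℕ) (P : MvPolynomial (Fin m) ℝ) (x : Fin m → ℝ) :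
    (Fin m → ℝ) →L[ℝ] ℝ :=
  ∑ i : Fin m, eval x (pderiv i P) • (ContinuousLinearMap.proj i :
    (Fin m → ℝ) →L[ℝ] ℝ)

theorem hasFDerivAt_eval (m : ℕ) (P : MvPolynomial (Fin m) ℝ) (x : Fin m → ℝ) :
    HasFDerivAt (fun y => eval y P) (Dpoly m P x) x := by
  induction P using MvPolynomial.induction_on with
  | C a =>
      simp only [eval_C]
      have : Dpoly m (C a) x = 0 := by
        simp [Dpoly]
      rw [this]
      exact hasFDerivAt_const _ _
  | add p q hp hq =>
      have : Dpoly m (p + q) x = Dpoly m p x + Dpoly m q x := by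
        simp [Dpoly, add_smul, Finset.sum_add_distrib]
      rw [this]
      simpa [Pi.add_def] using hp.add hq
  | mul_X p n hp =>
      have h2 := hasFDerivAt_apply (𝕜 := ℝ) (F' := fun _ : Fin m => ℝ) n x
      have := hp.mul h2
      have heq : Dpoly m (p * X n) x
          = eval x p • ContinuousLinearMap.proj n + x n • Dpoly m p x := by
        ext v
        simp only [Dpoly, pderiv_mul, pderiv_X, map_add, map_mul,
          ContinuousLinearMap.add_apply, ContinuousLinearMap.smul_apply,
          ContinuousLinearMap.sum_apply, ContinuousLinearMap.proj_apply,
          smul_eq_mul, eval_X]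
        have key : ∀ i : Fin m,
            (eval x) (Pi.single (M := fun _ : Fin m => MvPolynomial (Fin m) ℝ) i 1 n)
              = if i = n then 1 else 0 := by
          intro i
          rcases eq_or_ne i n with h | h
          · subst h; simp
          · simp [h, Pi.single_eq_of_ne h]
        simp only [key, mul_ite, ite_mul, mul_one, mul_zero, zero_mul, add_mul]
        rw [Finset.sum_add_distrib,
          Finset.sum_ite_eq' Finset.univ n (fun i => eval x p * v i)]
        rw [add_comm, Finset.mul_sum]
        simp only [Finset.mem_univ, if_true]
        congr 1
        apply Finset.sum_congr rfl
        intro i _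
        ring
      rw [heq]
      simpa [Pi.mul_def] using this

theorem Dpoly_single (m : ℕ) (P : MvPolynomial (Fin m) ℝ) (x : Fin m → ℝ) (i : Fin m) :
    Dpoly m P x (Pi.single i 1) = eval x (pderiv i P) := by
  simp only [Dpoly, ContinuousLinearMap.sum_apply, ContinuousLinearMap.smul_apply,
    ContinuousLinearMap.proj_apply, smul_eq_mul]
  rw [Finset.sum_eq_single i]
  · simp
  · intro j _ hj
    simp [Pi.single_eq_of_ne hj]
  · simp

/-- The quadratic polynomial `|x|²`. -/
noncomputable def Qp (m : ℕ) : MvPolynomial (Fin m) ℝ := ∑ i : Fin m, X i ^ 2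

theorem nsqF_eq (m : ℕ) (x : Fin m → ℝ) : nsqF m x = eval x (Qp m) := by
  simp [nsqF, Qp]

theorem pderiv_Qp (m : ℕ) (i : Fin m) : pderiv i (Qp m) = C 2 * X i := by
  have h2 : (C 2 : MvPolynomial (Fin m) ℝ) = 2 := by
    rw [map_ofNat]
  rw [Qp, map_sum, Finset.sum_eq_single i, h2]
  · rw [pow_two, pderiv_mul, pderiv_X_self]
    ring
  · intro j _ hj
    rw [pow_two, pderiv_mul, pderiv_X_of_ne hj]
    ring
  · simp

/-- Gaussian times polynomial. -/
noncomputable def G (m : ℕ) (P : MvPolynomial (Fin m) ℝ) (y : Fin m → ℝ) : ℝ :=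
  Real.exp (-(nsqF m y)) * eval y P

/-- Conjugated partial derivative. -/
noncomputable def dOp (m : ℕ) (i : Fin m) (P : MvPolynomial (Fin m) ℝ) :
    MvPolynomial (Fin m) ℝ :=
  pderiv i P - C 2 * X i * P

theorem hasFDerivAt_G (m : ℕ) (P : MvPolynomial (Fin m) ℝ) (x : Fin m → ℝ) :
    HasFDerivAt (G m P)
      (Real.exp (-(nsqF m x)) • Dpoly m P x +
        eval x P • (Real.exp (-(nsqF m x)) • -Dpoly m (Qp m) x)) x := by
  have h1 : HasFDerivAt (fun y => Real.exp (-(nsqF m y)))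
      (Real.exp (-(nsqF m x)) • -Dpoly m (Qp m) x) x := by
    have := ((hasFDerivAt_eval m (Qp m) x).neg).exp
    simp only [← nsqF_eq] at this
    simp only [Pi.neg_apply] at this
    convert this using 2
  have h2 := hasFDerivAt_eval m P x
  exact h1.mul h2

theorem fderiv_G_single (m : ℕ) (P : MvPolynomial (Fin m) ℝ) (x : Fin m → ℝ) (i : Fin m) :
    fderiv ℝ (G m P) x (Pi.single i 1) = G m (dOp m i P) x := by
  rw [(hasFDerivAt_G m P x).fderiv]
  simp only [ContinuousLinearMap.add_apply, ContinuousLinearMap.smul_apply,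
    ContinuousLinearMap.neg_apply, Dpoly_single, smul_eq_mul, G, dOp, map_sub, map_mul,
    eval_C, eval_X, pderiv_Qp]
  ring

theorem sum_d2 (m : ℕ) (P : MvPolynomial (Fin m) ℝ) :
    ∑ i : Fin m, dOp m i (dOp m i P) = -(Dplus2 m P) := by
  have expand : ∀ i : Fin m, dOp m i (dOp m i P)
      = pderiv i (pderiv i P) - C 2 * P - C 4 * (X i * pderiv i P)
        + C 4 * (X i ^ 2 * P) := by
    intro i
    have h2 : (C 2 : MvPolynomial (Fin m) ℝ) = 2 := by rw [map_ofNat]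
    have h4 : (C 4 : MvPolynomial (Fin m) ℝ) = 4 := by rw [map_ofNat]
    simp only [dOp, map_sub, pderiv_mul, pderiv_X_self, pderiv_C]
    simp only [h2, h4]
    ring
  rw [Finset.sum_congr rfl (fun i _ => expand i)]
  simp only [Dplus2, lap, euler, nsqOp, LinearMap.add_apply, LinearMap.sub_apply,
    LinearMap.neg_apply, LinearMap.smul_apply, Module.End.one_apply, LinearMap.sum_apply,
    Module.End.mul_apply, LinearMap.mulLeft_apply, Derivation.coeFn_coe]
  rw [Finset.sum_add_distrib, Finset.sum_sub_distrib, Finset.sum_sub_distrib,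
    Finset.sum_const, Finset.card_univ, Fintype.card_fin]
  rw [← Finset.mul_sum, ← Finset.mul_sum, ← Finset.sum_mul]
  rw [smul_eq_C_mul, smul_eq_C_mul, smul_eq_C_mul, nsmul_eq_mul]
  rw [map_natCast (C : ℝ →+* MvPolynomial (Fin m) ℝ) (2 * m)]
  rw [show (C 2 : MvPolynomial (Fin m) ℝ) = 2 from map_ofNat _ 2]
  push_cast
  ring

theorem lapF_G (m : ℕ) (P : MvPolynomial (Fin m) ℝ) (x : Fin m → ℝ) :
    lapF m (G m P) x = -G m (Dplus2 m P) x := by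
  have hinner : ∀ i : Fin m,
      (fun y => fderiv ℝ (G m P) y (Pi.single i 1)) = G m (dOp m i P) := by
    intro i; funext y; exact fderiv_G_single m P y i
  unfold lapF
  calc ∑ i : Fin m, fderiv ℝ (fun y => fderiv ℝ (G m P) y (Pi.single i 1)) x (Pi.single i 1)
      = ∑ i : Fin m, G m (dOp m i (dOp m i P)) x := by
        apply Finset.sum_congr rfl
        intro i _
        rw [hinner i, fderiv_G_single]
    _ = Real.exp (-(nsqF m x)) * eval x (∑ i : Fin m, dOp m i (dOp m i P)) := by
        rw [map_sum, Finset.mul_sum]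
        rfl
    _ = -G m (Dplus2 m P) x := by
        rw [sum_d2, map_neg, G]
        ring

theorem iter_G (m t : ℕ) (H : MvPolynomial (Fin m) ℝ) :
    (fun g => fun y => -lapF m g y)^[t] (G m H) = G m ((Dplus2 m ^ t) H) := by
  induction t with
  | zero => simp
  | succ t ih =>
      rw [Function.iterate_succ_apply', ih]
      funext y
      show -lapF m (G m ((Dplus2 m ^ t) H)) y = G m ((Dplus2 m ^ (t + 1)) H) y
      rw [lapF_G, neg_neg, pow_succ', Module.End.mul_apply]

theorem rodrigues_formula (m k t : ℕ) (H : MvPolynomial (Fin m) ℝ)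
    (hH : H.IsHomogeneous k) (hharm : lap m H = 0) (x : Fin m → ℝ) :
    eval x ((Dplus2 m ^ t) H) =
      Real.exp (nsqF m x) *
        ((fun g => fun y => -lapF m g y)^[t]
          (fun y => Real.exp (-(nsqF m y)) * eval y H) x) := by
  have : (fun y => Real.exp (-(nsqF m y)) * eval y H) = G m H := rfl
  rw [this, iter_G, G, ← mul_assoc, ← Real.exp_add, add_neg_cancel, Real.exp_zero, one_mul]
end
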